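/- Let R be a commutative unital Krasner hyperring. The hyperspace 𝓘⁺_R of proper hyperideals of R, endowed with the lower topology generated by the closed subbasis {V_J = {I ∈ 𝓘⁺_R : J ⊆ I} : J a hyperideal}, is a spectral space. -/

import Mathlib

universe u v

/-- A canonical hypergroup: a commutative, associative hyperoperation with
neutral element, unique inverses, and reversibility. -/
structure CanonicalHypergroup (R : Type u) where
  add : R → R → Set R
  zero : R
  neg : R → R
  add_nonempty : ∀ a b : R, (add a b).Nonempty
  add_comm : ∀ a b : R, add a b = add b a
  add_assoc : ∀ a b c : R, (⋃ x ∈ add a b, add x c) = ⋃ x ∈ add b c, add a x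
  add_zero : ∀ a : R, add a zero = {a}
  zero_mem_add_neg : ∀ a : R, zero ∈ add a (neg a)
  neg_unique : ∀ a b : R, zero ∈ add a b → b = neg a
  reversible : ∀ a b c : R, a ∈ add b c → c ∈ add (neg b) a

/-- A commutative Krasner hyperring. -/
structure KrasnerHyperring (R : Type u) extends CanonicalHypergroup R where
  mul : R → R → R
  mul_comm : ∀ a b : R, mul a b = mul b a
  mul_assoc : ∀ a b c : R, mul (mul a b) c = mul a (mul b c)
  mul_zero : ∀ a : R, mul a zero = zero
  distrib : ∀ a b c : R, (fun x => mul a x) '' add b c = add (mul a b) (mul a c)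

/-- A commutative unital Krasner hyperring. -/
structure UnitalKrasnerHyperring (R : Type u) extends KrasnerHyperring R where
  one : R
  mul_one : ∀ a : R, mul a one = a

/-- A hyperideal of a Krasner hyperring: a nonempty subset closed under
hyperaddition, negation, and multiplication by arbitrary elements. -/
def IsHyperideal {R : Type u} (H : KrasnerHyperring R) (I : Set R) : Prop :=
  I.Nonempty ∧ (∀ a ∈ I, ∀ b ∈ I, H.add a b ⊆ I) ∧ (∀ a ∈ I, H.neg a ∈ I) ∧
    ∀ r a : R, a ∈ I → H.mul r a ∈ I

/-- Iterated hypersum of a list of elements (empty sum is `{0}`). -/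
def listHyperSum {R : Type u} (H : CanonicalHypergroup R) : List R → Set R
  | [] => {H.zero}
  | a :: l => ⋃ x ∈ listHyperSum H l, H.add a x

/-- The sum of a family of hyperideals: all `x` lying in a finite hypersum of
elements picked from finitely many members of the family. -/
def hyperidealFamilySum {R : Type u} {Λ : Type v} (H : KrasnerHyperring R)
    (I : Λ → Set R) : Set R :=
  {x | ∃ (s : Finset Λ) (a : Λ → R), (∀ l ∈ s, a l ∈ I l) ∧
    x ∈ listHyperSum H.toCanonicalHypergroup (s.toList.map a)}

/-- The hyperideal generated by a set: the intersection of all hyperideals containing it. -/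
def genHyperideal {R : Type u} (H : KrasnerHyperring R) (S : Set R) : Set R :=
  ⋂₀ {I : Set R | IsHyperideal H I ∧ S ⊆ I}

/-- Compact element of the lattice of hyperideals. -/
def IsCompactHyperideal {R : Type u} (H : KrasnerHyperring R) (I : Set R) : Prop :=
  IsHyperideal H I ∧ ∀ (Λ : Type u) (J : Λ → Set R), (∀ l, IsHyperideal H (J l)) →
    I ⊆ genHyperideal H (⋃ l, J l) →
      ∃ s : Finset Λ, I ⊆ genHyperideal H (⋃ l ∈ s, J l)

/-- A spectral space: quasi-compact, sober, with a basis of quasi-compact open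
sets closed under finite intersections. -/
def IsSpectralSpace (X : Type u) [TopologicalSpace X] : Prop :=
  CompactSpace X ∧ QuasiSober X ∧ T0Space X ∧
    ∃ B : Set (Set X), TopologicalSpace.IsTopologicalBasis B ∧
      (∀ U ∈ B, IsCompact U) ∧ ∀ U ∈ B, ∀ V ∈ B, U ∩ V ∈ B

/-- The hyperspace of all hyperideals of `R`. -/
def HyperidealSpace {R : Type u} (H : KrasnerHyperring R) : Type u :=
  {I : Set R // IsHyperideal H I}

/-- The hyperspace of proper hyperideals of `R`. -/
def ProperHyperidealSpace {R : Type u} (H : KrasnerHyperring R) : Type u :=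
  {I : Set R // IsHyperideal H I ∧ I ≠ Set.univ}

/-- The lower topology on the hyperspace of all hyperideals: the closed sets are
generated by the subbasis `V_J = {I : J ⊆ I}` for hyperideals `J`. -/
instance hyperidealSpaceTopology {R : Type u} (H : KrasnerHyperring R) :
    TopologicalSpace (HyperidealSpace H) :=
  TopologicalSpace.generateFrom
    {U | ∃ J : Set R, IsHyperideal H J ∧ U = {I : HyperidealSpace H | ¬ J ⊆ I.1}}

/-- The lower topology on the hyperspace of proper hyperideals. -/
instance properHyperidealSpaceTopology {R : Type u} (H : KrasnerHyperring R) :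
    TopologicalSpace (ProperHyperidealSpace H) :=
  TopologicalSpace.generateFrom
    {U | ∃ J : Set R, IsHyperideal H J ∧ U = {I : ProperHyperidealSpace H | ¬ J ⊆ I.1}}

/-- The lower topology on a complete lattice: closed sets generated by the
subbasis of principal up-sets `Ici x`. -/
def latticeLowerTopology (L : Type u) [CompleteLattice L] : TopologicalSpace L :=
  TopologicalSpace.generateFrom {U | ∃ x : L, U = (Set.Ici x)ᶜ}
section KrasnerAux

open TopologicalSpace Set Filter

namespace KrasnerAux

variable {R : Type u}

lemma zero_mem (K : KrasnerHyperring R) {I : Set R} (h : IsHyperideal K I) :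
    K.zero ∈ I := by
  obtain ⟨⟨a, ha⟩, -, -, hmul⟩ := h
  have := hmul K.zero a ha
  rwa [K.mul_comm, K.mul_zero] at this

lemma univ_hyperideal (K : KrasnerHyperring R) : IsHyperideal K Set.univ :=
  ⟨⟨K.zero, trivial⟩, fun _ _ _ _ => Set.subset_univ _, fun _ _ => trivial,
    fun _ _ _ => trivial⟩

lemma sInter_hyperideal (K : KrasnerHyperring R) {𝒮 : Set (Set R)} (hne : 𝒮.Nonempty)
    (h : ∀ I ∈ 𝒮, IsHyperideal K I) : IsHyperideal K (⋂₀ 𝒮) := by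
  refine ⟨⟨K.zero, Set.mem_sInter.2 fun I hI => zero_mem K (h I hI)⟩, ?_, ?_, ?_⟩
  · intro a ha b hb x hx
    exact Set.mem_sInter.2 fun I hI =>
      (h I hI).2.1 a (Set.mem_sInter.1 ha I hI) b (Set.mem_sInter.1 hb I hI) hx
  · intro a ha
    exact Set.mem_sInter.2 fun I hI => (h I hI).2.2.1 a (Set.mem_sInter.1 ha I hI)
  · intro r a ha
    exact Set.mem_sInter.2 fun I hI => (h I hI).2.2.2 r a (Set.mem_sInter.1 ha I hI)

lemma gen_isHyperideal (K : KrasnerHyperring R) (S : Set R) :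
    IsHyperideal K (genHyperideal K S) :=
  sInter_hyperideal K ⟨Set.univ, univ_hyperideal K, Set.subset_univ _⟩ fun _ hI => hI.1

lemma subset_gen (K : KrasnerHyperring R) (S : Set R) : S ⊆ genHyperideal K S :=
  fun _x hx => Set.mem_sInter.2 fun _I hI => hI.2 hx

lemma gen_subset (K : KrasnerHyperring R) {S I : Set R} (hI : IsHyperideal K I)
    (hS : S ⊆ I) : genHyperideal K S ⊆ I :=
  Set.sInter_subset_of_mem ⟨hI, hS⟩

lemma eq_univ_of_one_mem (H : UnitalKrasnerHyperring R) {I : Set R}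
    (hI : IsHyperideal H.toKrasnerHyperring I) (h1 : H.one ∈ I) : I = Set.univ := by
  ext r
  simp only [Set.mem_univ, iff_true]
  have := hI.2.2.2 r H.one h1
  rwa [H.mul_one] at this

variable (H : UnitalKrasnerHyperring R)

/-- The full subbasis of opens. -/
def subAll : Set (Set (ProperHyperidealSpace H.toKrasnerHyperring)) :=
  {U | ∃ J : Set R, IsHyperideal H.toKrasnerHyperring J ∧
    U = {I : ProperHyperidealSpace H.toKrasnerHyperring | ¬ J ⊆ I.1}}

/-- The subbasis of opens coming from finitely generated hyperideals. -/
def subFin : Set (Set (ProperHyperidealSpace H.toKrasnerHyperring)) :=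
  {U | ∃ S : Finset R,
    U = {I : ProperHyperidealSpace H.toKrasnerHyperring |
      ¬ genHyperideal H.toKrasnerHyperring ↑S ⊆ I.1}}

lemma topo_eq_all : properHyperidealSpaceTopology H.toKrasnerHyperring =
    TopologicalSpace.generateFrom (subAll H) := rfl

lemma subFin_subset_subAll : subFin H ⊆ subAll H := by
  rintro _ ⟨S, rfl⟩
  exact ⟨_, gen_isHyperideal _ _, rfl⟩

lemma uJ_eq_union {J : Set R} :
    {I : ProperHyperidealSpace H.toKrasnerHyperring | ¬ J ⊆ I.1} =
      ⋃ x ∈ J, {I : ProperHyperidealSpace H.toKrasnerHyperring |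
        ¬ genHyperideal H.toKrasnerHyperring {x} ⊆ I.1} := by
  ext I
  simp only [Set.mem_setOf_eq, Set.mem_iUnion, exists_prop]
  constructor
  · intro h
    obtain ⟨x, hxJ, hxI⟩ := Set.not_subset.1 h
    exact ⟨x, hxJ, fun hc => hxI (hc (subset_gen _ _ rfl))⟩
  · rintro ⟨x, hxJ, hx⟩ hJI
    exact hx (gen_subset _ I.2.1 (Set.singleton_subset_iff.2 (hJI hxJ)))

lemma topo_eq_fin : properHyperidealSpaceTopology H.toKrasnerHyperring =
    TopologicalSpace.generateFrom (subFin H) := by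
  rw [topo_eq_all]
  refine le_antisymm (TopologicalSpace.generateFrom_anti (subFin_subset_subAll H)) ?_
  apply le_generateFrom
  rintro U ⟨J, hJ, rfl⟩
  show TopologicalSpace.GenerateOpen (subFin H) _
  rw [uJ_eq_union H, ← Set.sUnion_image]
  apply TopologicalSpace.GenerateOpen.sUnion
  rintro _ ⟨x, hxJ, rfl⟩
  exact TopologicalSpace.GenerateOpen.basic _ ⟨{x}, by rw [Finset.coe_singleton]⟩

lemma open_lower {U : Set (ProperHyperidealSpace H.toKrasnerHyperring)}
    (hU : TopologicalSpace.GenerateOpen (subAll H) U)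
    {p I : ProperHyperidealSpace H.toKrasnerHyperring} (hpI : p.1 ⊆ I.1) :
    I ∈ U → p ∈ U := by
  induction hU with
  | basic u hu =>
    obtain ⟨J, hJ, rfl⟩ := hu
    exact fun h hc => h (hc.trans hpI)
  | univ => exact fun _ => trivial
  | inter u v _ _ ihu ihv => exact fun h => ⟨ihu h.1, ihv h.2⟩
  | sUnion S _ ih =>
    rintro ⟨u, huS, hIu⟩
    exact ⟨u, huS, ih u huS hIu⟩

lemma compact_sInter (f : Set (Set (ProperHyperidealSpace H.toKrasnerHyperring)))
    (hfin : f.Finite) (hsub : f ⊆ subFin H) : IsCompact (⋂₀ f) := by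
  rw [isCompact_iff_ultrafilter_le_nhds]
  intro φ hφ
  rw [Filter.le_principal_iff] at hφ
  set m : Set R :=
    {r | {I : ProperHyperidealSpace H.toKrasnerHyperring | r ∈ I.1} ∈ φ} with hm
  have hmem_iff : ∀ r : R, r ∈ m ↔
      {I : ProperHyperidealSpace H.toKrasnerHyperring | r ∈ I.1} ∈ φ :=
    fun r => Iff.rfl
  have hideal : IsHyperideal H.toKrasnerHyperring m := by
    refine ⟨⟨H.toKrasnerHyperring.zero, ?_⟩, ?_, ?_, ?_⟩
    · exact Filter.mem_of_superset Filter.univ_mem fun I _ => zero_mem _ I.2.1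
    · intro a ha b hb x hx
      exact Filter.mem_of_superset (Filter.inter_mem ha hb)
        fun I hI => I.2.1.2.1 a hI.1 b hI.2 hx
    · intro a ha
      exact Filter.mem_of_superset ha fun I hI => I.2.1.2.2.1 a hI
    · intro r a ha
      exact Filter.mem_of_superset ha fun I hI => I.2.1.2.2.2 r a hI
  have hne : m ≠ Set.univ := by
    intro hc
    have h1 : {I : ProperHyperidealSpace H.toKrasnerHyperring | H.one ∈ I.1} ∈ φ := by
      have : H.one ∈ m := hc ▸ Set.mem_univ _
      exact this
    have hempty : {I : ProperHyperidealSpace H.toKrasnerHyperring | H.one ∈ I.1} = ∅ :=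
      Set.eq_empty_iff_forall_notMem.2 fun I hI => I.2.2 (eq_univ_of_one_mem H I.2.1 hI)
    have he : (∅ : Set (ProperHyperidealSpace H.toKrasnerHyperring)) ∈ φ := hempty ▸ h1
    exact Filter.empty_notMem _ he
  refine ⟨⟨m, hideal, hne⟩, ?_, ?_⟩
  · refine Set.mem_sInter.2 fun u hu => ?_
    obtain ⟨S, rfl⟩ := hsub hu
    show ¬ genHyperideal H.toKrasnerHyperring ↑S ⊆ m
    intro hc
    have hmem : ∀ x ∈ S, {I : ProperHyperidealSpace H.toKrasnerHyperring | x ∈ I.1} ∈ φ :=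
      fun x hx => hc (subset_gen _ _ (Finset.mem_coe.2 hx))
    have hB : (⋂ x ∈ S, {I : ProperHyperidealSpace H.toKrasnerHyperring | x ∈ I.1}) ∈ φ :=
      (Filter.biInter_finset_mem S).2 hmem
    have hu' : ({I : ProperHyperidealSpace H.toKrasnerHyperring |
        ¬ genHyperideal H.toKrasnerHyperring ↑S ⊆ I.1}) ∈ φ :=
      Filter.mem_of_superset hφ (Set.sInter_subset_of_mem hu)
    obtain ⟨I, hI1, hI2⟩ := Filter.nonempty_of_mem (Filter.inter_mem hu' hB)
    have : (↑S : Set R) ⊆ I.1 := fun x hx => Set.mem_iInter₂.1 hI2 x hx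
    exact hI1 (gen_subset _ I.2.1 this)
  · apply le_nhds_iff.2
    intro s hps hs
    have hgen : TopologicalSpace.GenerateOpen (subAll H) s := hs
    clear hs
    revert hps
    induction hgen with
    | basic u hu =>
      intro hps
      obtain ⟨J, hJ, rfl⟩ := hu
      obtain ⟨x, hxJ, hxm⟩ := Set.not_subset.1 hps
      have hx' : {I : ProperHyperidealSpace H.toKrasnerHyperring | x ∈ I.1}ᶜ ∈ φ :=
        Ultrafilter.compl_mem_iff_notMem.2 hxm
      exact Filter.mem_of_superset hx' fun I hI hc => hI (hc hxJ)
    | univ => exact fun _ => Filter.univ_mem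
    | inter u v _ _ ihu ihv => exact fun hps => Filter.inter_mem (ihu hps.1) (ihv hps.2)
    | sUnion S _ ih =>
      rintro ⟨u, huS, hpu⟩
      exact Filter.mem_of_superset (ih u huS hpu) (Set.subset_sUnion_of_mem huS)

end KrasnerAux

end KrasnerAux

open KrasnerAux in
/-- main theorem: the hyperspace of proper hyperideals of a
commutative unital Krasner hyperring, with the lower topology, is spectral. -/
theorem properHyperidealSpace_spectral {R : Type u} (H : UnitalKrasnerHyperring R) :
    IsSpectralSpace (ProperHyperidealSpace H.toKrasnerHyperring) := by
  refine ⟨?_, ?_, ?_, ?_⟩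
  · -- CompactSpace
    constructor
    have := compact_sInter H ∅ Set.finite_empty (Set.empty_subset _)
    rwa [Set.sInter_empty] at this
  · -- QuasiSober
    constructor
    intro S hirr hclosed
    classical
    obtain ⟨I₀, hI₀⟩ := hirr.1
    have hSne : ((fun I : ProperHyperidealSpace H.toKrasnerHyperring => I.1) '' S).Nonempty :=
      ⟨I₀.1, I₀, hI₀, rfl⟩
    obtain ⟨m, hmdef⟩ : ∃ m : Set R,
        m = ⋂₀ ((fun I : ProperHyperidealSpace H.toKrasnerHyperring => I.1) '' S) := ⟨_, rfl⟩
    have hideal : IsHyperideal H.toKrasnerHyperring m := by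
      rw [hmdef]
      exact sInter_hyperideal _ hSne (by rintro _ ⟨I, -, rfl⟩; exact I.2.1)
    have hmsub : ∀ I ∈ S, m ⊆ I.1 := by
      intro I hI
      rw [hmdef]
      exact Set.sInter_subset_of_mem ⟨I, hI, rfl⟩
    have hne : m ≠ Set.univ := by
      intro hc
      have h2 := hmsub I₀ hI₀
      rw [hc] at h2
      exact I₀.2.2 (Set.eq_univ_of_univ_subset h2)
    set p : ProperHyperidealSpace H.toKrasnerHyperring := ⟨m, hideal, hne⟩ with hpdef
    have hpS : p ∈ S := by
      by_contra hp
      obtain ⟨v, hvB, hpv, hvS⟩ :=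
        (TopologicalSpace.isTopologicalBasis_of_subbasis
          (topo_eq_all H)).exists_subset_of_mem_open hp hclosed.isOpen_compl
      obtain ⟨g, ⟨hgfin, hgsub⟩, rfl⟩ := hvB
      obtain ⟨z, hz, hSz⟩ := (isIrreducible_iff_sUnion_isClosed.1 hirr)
        (hgfin.toFinset.image compl)
        (by
          intro z hz
          obtain ⟨u, hug, rfl⟩ := Finset.mem_image.1 hz
          have hug' : u ∈ g := hgfin.mem_toFinset.1 hug
          have : IsOpen u := TopologicalSpace.GenerateOpen.basic _ (hgsub hug')
          exact this.isClosed_compl)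
        (by
          intro I hI
          have hInotv : I ∉ ⋂₀ g := fun hc => hvS hc hI
          have : ∃ u ∈ g, I ∉ u := by
            by_contra hc
            push_neg at hc
            exact hInotv (Set.mem_sInter.2 hc)
          obtain ⟨u, hug, hIu⟩ := this
          exact Set.mem_sUnion.2 ⟨uᶜ, Finset.mem_coe.2
            (Finset.mem_image.2 ⟨u, hgfin.mem_toFinset.2 hug, rfl⟩), hIu⟩)
      obtain ⟨u, hug, rfl⟩ := Finset.mem_image.1 hz
      have hug' : u ∈ g := hgfin.mem_toFinset.1 hug
      obtain ⟨J, hJ, rfl⟩ := hgsub hug'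
      have hpu : ¬ J ⊆ p.1 := Set.mem_sInter.1 hpv _ hug'
      refine hpu ?_
      show J ⊆ m
      rw [hmdef]
      intro x hx
      refine Set.mem_sInter.2 ?_
      rintro _ ⟨I, hIS, rfl⟩
      have hIz := hSz hIS
      simp only [Set.mem_compl_iff, Set.mem_setOf_eq, not_not] at hIz
      exact hIz hx
    refine ⟨p, Set.Subset.antisymm ?_ ?_⟩
    · exact hclosed.closure_subset_iff.2 (Set.singleton_subset_iff.2 hpS)
    · intro I hI
      rw [mem_closure_iff]
      intro o ho hIo
      exact ⟨p, open_lower H ho (hmsub I hI) hIo, rfl⟩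
  · -- T0
    rw [t0Space_iff_inseparable]
    intro x y h
    rw [inseparable_iff_forall_isOpen] at h
    have hx : IsOpen {I : ProperHyperidealSpace H.toKrasnerHyperring | ¬ x.1 ⊆ I.1} :=
      TopologicalSpace.GenerateOpen.basic _ ⟨x.1, x.2.1, rfl⟩
    have hy : IsOpen {I : ProperHyperidealSpace H.toKrasnerHyperring | ¬ y.1 ⊆ I.1} :=
      TopologicalSpace.GenerateOpen.basic _ ⟨y.1, y.2.1, rfl⟩
    have h1 : x.1 ⊆ y.1 := by
      by_contra hc
      exact ((h _ hx).2 hc) (subset_refl _)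
    have h2 : y.1 ⊆ x.1 := by
      by_contra hc
      exact ((h _ hy).1 hc) (subset_refl _)
    exact Subtype.ext (Set.Subset.antisymm h1 h2)
  · -- basis of compact opens
    refine ⟨_, TopologicalSpace.isTopologicalBasis_of_subbasis (topo_eq_fin H), ?_, ?_⟩
    · rintro U ⟨g, ⟨hgfin, hgsub⟩, rfl⟩
      exact compact_sInter H g hgfin hgsub
    · rintro _ ⟨g1, ⟨hf1, hs1⟩, rfl⟩ _ ⟨g2, ⟨hf2, hs2⟩, rfl⟩
      exact ⟨g1 ∪ g2, ⟨hf1.union hf2, Set.union_subset hs1 hs2⟩,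
        by exact Set.sInter_union g1 g2⟩
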